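/- Let A be a commutative ring, N its nilradical, and σ ∈ SL_n(A) a matrix congruent to the identity modulo N. Then σ ∈ E_n(A), the subgroup generated by elementary matrices. -/

import Mathlib

open Matrix

/-- A matrix lies in `E_n(A)`, the subgroup generated by elementary matrices, iff it
is a product of transvections. -/
def IsElementary {n : ℕ} {A : Type*} [CommRing A] (σ : Matrix (Fin n) (Fin n) A) : Prop :=
  ∃ L : List (TransvectionStruct (Fin n) A), σ = (L.map TransvectionStruct.toMatrix).prod

namespace ElemAux

variable {A : Type*} [CommRing A]

theorem gadget {n : ℕ} {B : Type*} [CommRing B] {i j : Fin n} (hij : i ≠ j) (s : B)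
    (hs : s * s = 0) :
    transvection i j s * transvection j i 1 * transvection i j (-s) * transvection j i (-1) *
      transvection j i (-s)
    = 1 + Matrix.single i i s + Matrix.single j j (-s) := by
  simp only [transvection, add_mul, mul_add, one_mul, mul_one,
    Matrix.single_mul_single_same, Matrix.single_mul_single_of_ne _ _ _ _ hij,
    Matrix.single_mul_single_of_ne _ _ _ _ hij.symm,
    mul_zero, zero_mul, add_zero, zero_add, hs, neg_mul, mul_neg, neg_neg, mul_one, one_mul]
  ext a b
  simp only [Matrix.add_apply, Matrix.single, Matrix.of_apply, neg_zero]
  split_ifs <;> simp_all <;> ring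

theorem det_congr_ideal {m : Type*} [Fintype m] [DecidableEq m] (I : Ideal A)
    (X Y : Matrix m m A) (h : ∀ i j, X i j - Y i j ∈ I) : X.det - Y.det ∈ I := by
  rw [← Ideal.Quotient.eq]
  have hXY : X.map (Ideal.Quotient.mk I) = Y.map (Ideal.Quotient.mk I) := by
    ext i j
    exact Ideal.Quotient.eq.mpr (h i j)
  rw [RingHom.map_det, RingHom.map_det, RingHom.mapMatrix_apply, RingHom.mapMatrix_apply, hXY]

theorem mul_eq_zero_of_mem {m : Type*} [Fintype m] (I : Ideal A) (hI : I * I = ⊥)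
    (X Y : Matrix m m A) (hX : ∀ i j, X i j ∈ I) (hY : ∀ i j, Y i j ∈ I) : X * Y = 0 := by
  ext i j
  rw [Matrix.mul_apply, Matrix.zero_apply]
  refine Finset.sum_eq_zero fun k _ => ?_
  have := Ideal.mul_mem_mul (hX i k) (hY k j)
  rwa [hI, Ideal.mem_bot] at this

theorem list_sum_entry_mem {m : Type*} (I : Ideal A) (L : List (Matrix m m A))
    (h : ∀ X ∈ L, ∀ i j, X i j ∈ I) (i j : m) : L.sum i j ∈ I := by
  induction L with
  | nil => simpa using I.zero_mem
  | cons X L ih =>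
    rw [List.sum_cons, Matrix.add_apply]
    exact add_mem (h X (by simp) i j) (ih fun Y hY => h Y (by simp [hY]))

theorem list_prod_one_add {m : Type*} [Fintype m] [DecidableEq m] (I : Ideal A) (hI : I * I = ⊥)
    (L : List (Matrix m m A)) (h : ∀ X ∈ L, ∀ i j, (X - 1) i j ∈ I) :
    L.prod = 1 + (L.map (fun X => X - 1)).sum := by
  induction L with
  | nil => simp
  | cons X L ih =>
    rw [List.prod_cons, List.map_cons, List.sum_cons, ih (fun Y hY => h Y (by simp [hY]))]
    have hz : (X - 1) * (L.map (fun Y => Y - 1)).sum = 0 := by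
      refine mul_eq_zero_of_mem I hI _ _ (fun i j => h X (by simp) i j) ?_
      intro i j
      refine list_sum_entry_mem I _ ?_ i j
      rintro Y hY
      simp only [List.mem_map] at hY
      obtain ⟨Z, hZ, rfl⟩ := hY
      exact h Z (by simp [hZ])
    have hexp : X * (1 + (L.map (fun Y => Y - 1)).sum)
        = 1 + ((X - 1) + (L.map (fun Y => Y - 1)).sum)
          + (X - 1) * (L.map (fun Y => Y - 1)).sum := by
      noncomm_ring
    rw [hexp, hz, add_zero]

theorem one_submatrix_succ {k : ℕ} :
    (1 : Matrix (Fin (k+1)) (Fin (k+1)) A).submatrix Fin.succ Fin.succ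
      = (1 : Matrix (Fin k) (Fin k) A) := by
  ext a b
  simp [Matrix.submatrix_apply, Matrix.one_apply, Fin.succ_inj]

theorem det_one_add_of_sq (I : Ideal A) (hI : I * I = ⊥) :
    ∀ {k : ℕ} (N : Matrix (Fin k) (Fin k) A), (∀ i j, N i j ∈ I) →
      (1 + N).det = 1 + N.trace := by
  intro k
  induction k with
  | zero =>
    intro N _
    simp [Matrix.det_fin_zero, Matrix.trace]
  | succ k ih =>
    intro N h
    have memsq : ∀ a b : A, a ∈ I → b ∈ I → a * b = 0 := by
      intro a b ha hb
      have := Ideal.mul_mem_mul ha hb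
      rwa [hI, Ideal.mem_bot] at this
    rw [Matrix.det_succ_row_zero, Fin.sum_univ_succ]
    have hsub : ((1 + N).submatrix Fin.succ (Fin.succAbove 0))
        = 1 + N.submatrix Fin.succ Fin.succ := by
      rw [Fin.succAbove_zero]
      ext a b
      simp [Matrix.submatrix_apply, Matrix.add_apply, Matrix.one_apply, Fin.succ_inj]
    have htr : (N.submatrix Fin.succ Fin.succ).trace ∈ I := by
      unfold Matrix.trace
      exact Ideal.sum_mem _ fun i _ => h _ _
    have hrest : ∀ j : Fin k,
        (-1 : A) ^ ((j.succ : Fin (k+1)) : ℕ) * (1 + N) 0 j.succ *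
          ((1 + N).submatrix Fin.succ (Fin.succAbove j.succ)).det = 0 := by
      intro j
      have h01 : (1 + N) 0 j.succ = N 0 j.succ := by
        simp [Matrix.add_apply, Matrix.one_apply_ne (Fin.succ_ne_zero j).symm]
      have hdetz : ((1 : Matrix (Fin (k+1)) (Fin (k+1)) A).submatrix Fin.succ
          (Fin.succAbove j.succ)).det = 0 := by
        apply Matrix.det_eq_zero_of_column_eq_zero (⟨0, j.pos⟩ : Fin k)
        intro a
        have h0 : (Fin.succAbove j.succ) (⟨0, j.pos⟩ : Fin k) = 0 := by
          rw [Fin.succAbove_of_castSucc_lt]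
          · rfl
          · simp [Fin.lt_def]
        rw [Matrix.submatrix_apply, h0]
        exact Matrix.one_apply_ne (Fin.succ_ne_zero a)
      have hmem : ((1 + N).submatrix Fin.succ (Fin.succAbove j.succ)).det ∈ I := by
        have := det_congr_ideal I ((1 + N).submatrix Fin.succ (Fin.succAbove j.succ))
          ((1 : Matrix (Fin (k+1)) (Fin (k+1)) A).submatrix Fin.succ (Fin.succAbove j.succ))
          (by
            intro a b
            simp only [Matrix.submatrix_apply, Matrix.add_apply]
            have heq : (1 : Matrix (Fin (k+1)) (Fin (k+1)) A) a.succ ((Fin.succAbove j.succ) b) +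
                N a.succ ((Fin.succAbove j.succ) b) -
                (1 : Matrix (Fin (k+1)) (Fin (k+1)) A) a.succ ((Fin.succAbove j.succ) b)
                = N a.succ ((Fin.succAbove j.succ) b) := by ring
            rw [heq]
            exact h _ _)
        rwa [hdetz, sub_zero] at this
      rw [h01, mul_assoc, memsq _ _ (h 0 j.succ) hmem, mul_zero]
    rw [Finset.sum_eq_zero (fun j _ => hrest j), add_zero]
    have h00 : (1 + N) 0 0 = 1 + N 0 0 := by
      simp [Matrix.add_apply, Matrix.one_apply]
    rw [hsub, ih (N.submatrix Fin.succ Fin.succ) (fun i j => h i.succ j.succ), h00]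
    have htrace : N.trace = N 0 0 + (N.submatrix Fin.succ Fin.succ).trace := by
      simp [Matrix.trace, Matrix.diag, Fin.sum_univ_succ, Matrix.submatrix_apply]
    have hz : N 0 0 * (N.submatrix Fin.succ Fin.succ).trace = 0 := memsq _ _ (h 0 0) htr
    simp only [Fin.val_zero, pow_zero, one_mul]
    rw [htrace, show (1 + N 0 0) * (1 + (N.submatrix Fin.succ Fin.succ).trace)
        = 1 + (N 0 0 + (N.submatrix Fin.succ Fin.succ).trace)
          + N 0 0 * (N.submatrix Fin.succ Fin.succ).trace by ring, hz, add_zero]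

theorem prod_flatMap {α M : Type*} [Monoid M] (g : α → List M) (l : List α) :
    (l.flatMap g).prod = (l.map fun x => (g x).prod).prod := by
  induction l with
  | nil => simp
  | cons x l ih => simp [List.flatMap_cons, List.prod_append, ih]

theorem sum_flatMap {α M : Type*} [AddCommMonoid M] (g : α → List M) (l : List α) :
    (l.flatMap g).sum = (l.map fun x => (g x).sum).sum := by
  induction l with
  | nil => simp
  | cons x l ih => simp [List.flatMap_cons, List.sum_append, ih]

theorem map_prod {m : Type*} [Fintype m] [DecidableEq m] {B : Type*} [CommRing B]
    (f : A →+* B) (l : List (Matrix m m A)) :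
    l.prod.map f = (l.map (fun X => X.map f)).prod := by
  have h := map_list_prod (f.mapMatrix) l
  exact h

theorem transvection_map {m : Type*} [DecidableEq m] {B : Type*} [CommRing B]
    (f : A →+* B) (i j : m) (c : A) :
    (transvection i j c).map f = transvection i j (f c) := by
  ext a b
  simp [transvection, Matrix.map_apply, Matrix.add_apply, Matrix.one_apply, Matrix.single,
    Matrix.of_apply, apply_ite f]

/-- A possibly-empty transvection list : empty when `i = j`. -/
def tv {m : Type*} [DecidableEq m] (i j : m) (c : A) : List (TransvectionStruct m A) :=
  if h : i = j then [] else [⟨i, j, h, c⟩]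

theorem det_tprod {m : Type*} [Fintype m] [DecidableEq m]
    (L : List (TransvectionStruct m A)) :
    ((L.map TransvectionStruct.toMatrix).prod).det = 1 := by
  induction L with
  | nil => simp
  | cons t L ih => simp [Matrix.det_mul, ih]

theorem step {n : ℕ} (J : Ideal A) (σ : Matrix (Fin (n+1)) (Fin (n+1)) A)
    (hdet : σ.det = 1) (hσ : ∀ i j, σ i j - (1 : Matrix (Fin (n+1)) (Fin (n+1)) A) i j ∈ J) :
    ∃ (L : List (TransvectionStruct (Fin (n+1)) A))
      (σ' : Matrix (Fin (n+1)) (Fin (n+1)) A),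
      σ = σ' * (L.map TransvectionStruct.toMatrix).prod ∧ σ'.det = 1 ∧
      ∀ i j, σ' i j - (1 : Matrix (Fin (n+1)) (Fin (n+1)) A) i j ∈ J ^ 2 := by
  classical
  set lst : Fin (n+1) := Fin.last n with hlst
  set d : Fin (n+1) → A := fun i => σ i i - 1 with hd
  set c' : Fin (n+1) → Fin (n+1) → A := fun i j => if i = j then 0 else σ i j with hc'
  set gl : Fin (n+1) → List (TransvectionStruct (Fin (n+1)) A) := fun i =>
    tv i lst (d i) ++ tv lst i 1 ++ tv i lst (-(d i)) ++ tv lst i (-1) ++ tv lst i (-(d i))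
    with hgl
  set L : List (TransvectionStruct (Fin (n+1)) A) :=
    ((List.finRange (n+1)).flatMap gl) ++
      ((List.finRange (n+1)).flatMap fun i =>
        (List.finRange (n+1)).flatMap fun j => tv i j (c' i j)) with hLdef
  set P := (L.map TransvectionStruct.toMatrix).prod with hPdef
  set π := Ideal.Quotient.mk (J ^ 2) with hπ
  have hIq : (J.map π) * (J.map π) = ⊥ := by
    rw [← Ideal.map_mul, ← pow_two, hπ, Ideal.map_quotient_self]
  have hmemq : ∀ a, a ∈ J → π a ∈ J.map π := fun a ha => Ideal.mem_map_of_mem π ha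
  have hdmem : ∀ i, d i ∈ J := by
    intro i; have := hσ i i; simpa [hd, Matrix.one_apply] using this
  have hc'mem : ∀ i j, c' i j ∈ J := by
    intro i j
    by_cases h : i = j
    · simp [hc', h, J.zero_mem]
    · have := hσ i j; simp only [Matrix.one_apply, if_neg h, sub_zero] at this
      simpa [hc', h] using this
  have hsq : ∀ a b, a ∈ J → b ∈ J → π a * π b = 0 := by
    intro a b ha hb
    have := Ideal.mul_mem_mul (hmemq a ha) (hmemq b hb)
    rwa [hIq, Ideal.mem_bot] at this
  -- gadget products
  have hgl_prod : ∀ i : Fin (n+1),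
      ((((gl i).map TransvectionStruct.toMatrix).prod).map π)
        = 1 + Matrix.single i i (π (d i)) + Matrix.single lst lst (-(π (d i))) := by
    intro i
    by_cases h : i = lst
    · subst h
      have hnil : gl lst = [] := by simp [hgl, tv]
      rw [hnil]
      simp only [List.map_nil, List.prod_nil]
      rw [Matrix.map_one (⇑π) (map_zero π) (map_one π), add_assoc, ← Matrix.single_add,
        add_neg_cancel, Matrix.single_zero, add_zero]
    · have h' : lst ≠ i := Ne.symm h
      simp only [hgl, tv, dif_neg h, dif_neg h', List.map_append, List.prod_append,
        List.map_cons, List.map_nil, List.prod_cons, List.prod_nil, mul_one,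
        TransvectionStruct.toMatrix_mk]
      rw [Matrix.map_mul, Matrix.map_mul, Matrix.map_mul, Matrix.map_mul]
      simp only [transvection_map, _root_.map_one, map_neg]
      exact gadget h (π (d i)) (hsq _ _ (hdmem i) (hdmem i))
  have htv_prod : ∀ i j : Fin (n+1),
      ((((tv i j (c' i j)).map TransvectionStruct.toMatrix).prod).map π)
        = 1 + Matrix.single i j (π (c' i j)) := by
    intro i j
    by_cases h : i = j
    · subst h
      have hnil : tv i i (c' i i) = ([] : List (TransvectionStruct (Fin (n+1)) A)) := by
        simp [tv]
      rw [hnil]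
      simp only [List.map_nil, List.prod_nil]
      rw [Matrix.map_one (⇑π) (map_zero π) (map_one π)]
      simp [hc']
    · simp only [tv, dif_neg h, List.map_cons, List.map_nil, List.prod_cons, List.prod_nil,
        mul_one, TransvectionStruct.toMatrix_mk, transvection_map]
      rfl
  -- the mod-J² model list
  set G : Fin (n+1) → Matrix (Fin (n+1)) (Fin (n+1)) (A ⧸ J ^ 2) := fun i =>
    1 + Matrix.single i i (π (d i)) + Matrix.single lst lst (-(π (d i))) with hG
  set O : Fin (n+1) → Fin (n+1) → Matrix (Fin (n+1)) (Fin (n+1)) (A ⧸ J ^ 2) := fun i j =>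
    1 + Matrix.single i j (π (c' i j)) with hO
  set LB : List (Matrix (Fin (n+1)) (Fin (n+1)) (A ⧸ J ^ 2)) :=
    ((List.finRange (n+1)).map G) ++
      ((List.finRange (n+1)).flatMap fun i => (List.finRange (n+1)).map (O i)) with hLB
  have hPmapLB : P.map π = LB.prod := by
    rw [hPdef, hLdef, List.map_append, List.prod_append, Matrix.map_mul, hLB,
      List.prod_append]
    congr 1
    · rw [List.map_flatMap, prod_flatMap, map_prod, List.map_map]
      exact congrArg List.prod (List.map_congr_left fun i _ => hgl_prod i)
    · rw [List.map_flatMap, prod_flatMap, map_prod, List.map_map, prod_flatMap]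
      refine congrArg List.prod (List.map_congr_left fun i _ => ?_)
      simp only [Function.comp]
      rw [List.map_flatMap, prod_flatMap, map_prod, List.map_map]
      exact congrArg List.prod (List.map_congr_left fun j _ => htv_prod i j)
  -- entries of std basis matrices are in the image ideal
  have hEntry : ∀ (u v : Fin (n+1)) (x : A ⧸ J ^ 2), x ∈ J.map π →
      ∀ a b, Matrix.single u v x a b ∈ J.map π := by
    intro u v x hx a b
    simp only [Matrix.single, Matrix.of_apply]
    split_ifs
    · exact hx
    · exact Submodule.zero_mem _
  have hLBmem : ∀ X ∈ LB, ∀ a b, (X - 1) a b ∈ J.map π := by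
    intro X hX a b
    rw [hLB, List.mem_append] at hX
    rcases hX with hX | hX
    · obtain ⟨i, _, rfl⟩ := List.mem_map.mp hX
      have : G i - 1 = Matrix.single i i (π (d i)) + Matrix.single lst lst (-(π (d i))) := by
        simp only [hG]
        rw [add_assoc, add_sub_cancel_left]
      rw [this, Matrix.add_apply]
      exact add_mem (hEntry _ _ _ (hmemq _ (hdmem i)) a b)
        (hEntry _ _ _ (neg_mem (hmemq _ (hdmem i))) a b)
    · rw [List.mem_flatMap] at hX
      obtain ⟨i, _, hX⟩ := hX
      obtain ⟨j, _, rfl⟩ := List.mem_map.mp hX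
      have : O i j - 1 = Matrix.single i j (π (c' i j)) := by
        simp only [hO]
        rw [add_sub_cancel_left]
      rw [this]
      exact hEntry _ _ _ (hmemq _ (hc'mem i j)) a b
  have hLBprod := list_prod_one_add (J.map π) hIq LB hLBmem
  -- the sum of the differences
  have hstdsum : ∀ (u v : Fin (n+1)) (f : Fin (n+1) → A ⧸ J ^ 2),
      (∑ i, Matrix.single u v (f i)) = Matrix.single u v (∑ i, f i) := by
    intro u v f
    ext a b
    rw [Matrix.sum_apply]
    by_cases hc : u = a ∧ v = b
    · simp [Matrix.single, hc]
    · simp [Matrix.single, hc]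
  -- N over the quotient
  set Nq : Matrix (Fin (n+1)) (Fin (n+1)) (A ⧸ J ^ 2) := (σ - 1).map π with hNq
  have hNqmem : ∀ a b, Nq a b ∈ J.map π := by
    intro a b
    rw [hNq, Matrix.map_apply]
    exact hmemq _ (by simpa [Matrix.sub_apply] using hσ a b)
  have hσmap : σ.map π = 1 + Nq := by
    rw [hNq]
    ext a b
    simp [Matrix.map_apply, Matrix.add_apply, Matrix.sub_apply, Matrix.one_apply, apply_ite π]
  -- trace is zero
  have htr0 : Nq.trace = 0 := by
    have hdetq : (1 + Nq).det = 1 := by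
      rw [← hσmap, ← RingHom.mapMatrix_apply, ← RingHom.map_det, hdet, _root_.map_one]
    have := det_one_add_of_sq (J.map π) hIq Nq hNqmem
    rw [hdetq] at this
    exact (add_eq_left.mp this.symm)
  have hNqdiag : ∀ i, Nq i i = π (d i) := by
    intro i
    rw [hNq, Matrix.map_apply, Matrix.sub_apply, Matrix.one_apply_eq]
  have htrsum : (∑ i, π (d i)) = 0 := by
    have : Nq.trace = ∑ i, Nq i i := rfl
    rw [this] at htr0
    simpa [hNqdiag] using htr0
  -- compute the sum
  have hsum : (LB.map (fun X => X - 1)).sum = Nq := by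
    rw [hLB, List.map_append, List.sum_append, List.map_map, List.map_flatMap, sum_flatMap]
    have h1 : (List.map ((fun X => X - 1) ∘ G) (List.finRange (n+1))).sum
        = ∑ i, (G i - 1) := by
      rw [Fin.sum_univ_def]; rfl
    have h2 : ((List.finRange (n+1)).map fun i =>
          ((List.map (O i) (List.finRange (n+1))).map (fun X => X - 1)).sum).sum
        = ∑ i, ∑ j, (O i j - 1) := by
      rw [Fin.sum_univ_def]
      congr 1
      refine List.map_congr_left fun i _ => ?_
      rw [List.map_map, Fin.sum_univ_def]
      rfl
    have h2' : ((List.finRange (n+1)).map fun i =>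
          (List.map (fun X => X - 1) (List.map (O i) (List.finRange (n+1)))).sum).sum
        = ∑ i, ∑ j, (O i j - 1) := by
      rw [← h2]
    rw [h1, h2']
    have hG1 : ∀ i, G i - 1 = Matrix.single i i (π (d i))
        + Matrix.single lst lst (-(π (d i))) := by
      intro i; simp only [hG]; rw [add_assoc, add_sub_cancel_left]
    have hO1 : ∀ i j, O i j - 1 = Matrix.single i j (π (c' i j)) := by
      intro i j; simp only [hO]; rw [add_sub_cancel_left]
    simp only [hG1, hO1]
    rw [Finset.sum_add_distrib, hstdsum]
    have hz : Matrix.single lst lst (∑ i, -(π (d i))) = 0 := by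
      rw [Finset.sum_neg_distrib, htrsum, neg_zero, Matrix.single_zero]
    rw [hz, add_zero]
    -- now : ∑ i stdB i i (π d i) + ∑ i ∑ j stdB i j (π c' i j) = Nq
    have hNqsplit : ∀ i j, Nq i j = π (c' i j) + (if i = j then π (d i) else 0) := by
      intro i j
      by_cases h : i = j
      · subst h
        simp [hNqdiag i, hc']
      · rw [hNq, Matrix.map_apply, Matrix.sub_apply, Matrix.one_apply_ne h, sub_zero]
        simp [hc', h]
    rw [matrix_eq_sum_single Nq]
    have hsplit : ∀ i j : Fin (n+1), Matrix.single i j (Nq i j)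
        = Matrix.single i j (π (c' i j))
          + (if i = j then Matrix.single i i (π (d i)) else 0) := by
      intro i j
      rw [hNqsplit i j, Matrix.single_add]
      congr 1
      by_cases h : i = j
      · subst h; simp
      · simp [h]
    simp only [hsplit]
    rw [show (∑ i, ∑ j, (Matrix.single i j (π (c' i j))
          + if i = j then Matrix.single i i (π (d i)) else 0))
        = (∑ i, ∑ j, Matrix.single i j (π (c' i j)))
          + ∑ i : Fin (n+1), ∑ j : Fin (n+1),
              (if i = j then Matrix.single i i (π (d i)) else 0) from by
      rw [← Finset.sum_add_distrib]
      exact Finset.sum_congr rfl fun i _ => by rw [← Finset.sum_add_distrib]]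
    have hdiagsum : (∑ i : Fin (n+1), ∑ j : Fin (n+1),
        (if i = j then Matrix.single i i (π (d i)) else 0))
        = ∑ i, Matrix.single i i (π (d i)) := by
      refine Finset.sum_congr rfl fun i _ => ?_
      rw [Finset.sum_ite_eq]
      simp
    rw [hdiagsum]
    abel
  -- conclude
  have hPσ : σ.map π = P.map π := by
    rw [hPmapLB, hLBprod, hsum, hσmap]
  have hkey : ∀ i j, σ i j - P i j ∈ J ^ 2 := by
    intro i j
    have h2 := Matrix.ext_iff.mpr hPσ i j
    rw [Matrix.map_apply, Matrix.map_apply] at h2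
    exact Ideal.Quotient.eq.mp h2
  set Q := (L.reverse.map (TransvectionStruct.toMatrix ∘ TransvectionStruct.inv)).prod with hQ
  refine ⟨L, σ * Q, ?_, ?_, ?_⟩
  · rw [mul_assoc]
    have hQP : Q * (L.map TransvectionStruct.toMatrix).prod = 1 := by
      rw [hQ]
      exact TransvectionStruct.reverse_inv_prod_mul_prod L
    rw [hQP, mul_one]
  · rw [Matrix.det_mul, hdet, one_mul, hQ]
    rw [show (L.reverse.map (TransvectionStruct.toMatrix ∘ TransvectionStruct.inv))
        = ((L.reverse.map TransvectionStruct.inv).map TransvectionStruct.toMatrix) from by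
      rw [List.map_map]]
    exact det_tprod _
  · intro i j
    have hPQ : P * Q = 1 := TransvectionStruct.prod_mul_reverse_inv_prod L
    have hς : σ * Q - 1 = (σ - P) * Q := by
      rw [Matrix.sub_mul, hPQ]
    have heq : (σ * Q) i j - (1 : Matrix (Fin (n+1)) (Fin (n+1)) A) i j
        = ((σ - P) * Q) i j := by
      rw [← Matrix.sub_apply, hς]
    rw [heq, Matrix.mul_apply]
    refine Ideal.sum_mem _ fun k _ => ?_
    have : (σ - P) i k ∈ J ^ 2 := by rw [Matrix.sub_apply]; exact hkey i k
    exact Ideal.mul_mem_right _ _ this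


theorem main {n : ℕ} {A : Type*} [CommRing A] :
    ∀ (k : ℕ) (J : Ideal A) (σ : Matrix (Fin (n+1)) (Fin (n+1)) A), J ^ k = ⊥ → σ.det = 1 →
      (∀ i j, σ i j - (1 : Matrix (Fin (n+1)) (Fin (n+1)) A) i j ∈ J) → IsElementary σ := by
  intro k
  induction k with
  | zero =>
    intro J σ hJ _ _
    have h1 : (1 : A) = 0 := by
      have h : (1 : A) ∈ J ^ 0 := by simp
      rw [hJ] at h
      exact Ideal.mem_bot.mp h
    have : Subsingleton A := subsingleton_of_zero_eq_one h1.symm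
    exact ⟨[], by ext i j; exact Subsingleton.elim _ _⟩
  | succ k ih =>
    intro J σ hJ hdet hσ
    rcases Nat.eq_zero_or_pos k with rfl | hk
    · have hJbot : J = ⊥ := by rwa [pow_one] at hJ
      have hσ1 : σ = 1 := by
        ext i j
        have := hσ i j
        rw [hJbot, Ideal.mem_bot, sub_eq_zero] at this
        exact this
      exact ⟨[], by simp [hσ1]⟩
    · obtain ⟨L, σ', hfact, hdet', hσ'⟩ := step J σ hdet hσ
      have h2 : (J ^ 2) ^ k = ⊥ := by
        rw [← pow_mul]
        have hle : J ^ (2 * k) ≤ J ^ (k + 1) := Ideal.pow_le_pow_right (by omega)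
        rw [hJ] at hle
        exact le_bot_iff.mp hle
      obtain ⟨L', hL'⟩ := ih (J ^ 2) σ' h2 hdet' hσ'
      refine ⟨L' ++ L, ?_⟩
      rw [hfact, hL', List.map_append, List.prod_append]

end ElemAux

theorem stmt10 (n : ℕ) (A : Type*) [CommRing A]
    (σ : Matrix (Fin n) (Fin n) A) (hdet : σ.det = 1)
    (hnil : ∀ i j, σ i j - (1 : Matrix (Fin n) (Fin n) A) i j ∈ nilradical A) :
    IsElementary σ := by
  match n, σ, hdet, hnil with
  | 0, σ, hdet, hnil =>
    exact ⟨[], by ext i j; exact i.elim0⟩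
  | (m+1), σ, hdet, hnil =>
    set J : Ideal A := Ideal.span
      (Set.range fun p : Fin (m+1) × Fin (m+1) =>
        σ p.1 p.2 - (1 : Matrix (Fin (m+1)) (Fin (m+1)) A) p.1 p.2) with hJ
    have hFG : J.FG := Submodule.fg_span (Set.finite_range _)
    have hle : J ≤ (⊥ : Ideal A).radical := by
      rw [hJ, Ideal.span_le]
      rintro x ⟨p, rfl⟩
      exact hnil p.1 p.2
    obtain ⟨k, hk⟩ := Ideal.exists_pow_le_of_le_radical_of_fg hle hFG
    exact ElemAux.main k J σ (le_bot_iff.mp hk) hdet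
      (fun i j => Ideal.subset_span ⟨(i, j), rfl⟩)
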